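/- Let m > 0 and β = m/(m+3). The function u₂(x,y) = λ₂ x^{β−4} y · F((5−β)/3, (6−β)/3; (2+β)/3; σ), where σ = (−3 y^{(m+3)/3}/(x(m+3)))³ and F is the Gauss hypergeometric function, satisfies y^m u_{xxx} − u_{yyy} = 0 at all points with x > 0, y > 0 and |σ| < 1. -/

import Mathlib

/-- Pochhammer symbol (a)_m = a(a+1)⋯(a+m−1). -/
noncomputable def poch (a : ℝ) (m : ℕ) : ℝ := ∏ i ∈ Finset.range m, (a + i)

/-- The Gauss hypergeometric function F(a,b;c;z). -/
noncomputable def GaussF (a b c z : ℝ) : ℝ :=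
  ∑' k : ℕ, poch a k * poch b k / (poch c k * (Nat.factorial k : ℝ)) * z ^ k

/-- The self-similar variable σ(x,y) = (−3 y^{(m+3)/3}/(x(m+3)))³. -/
noncomputable def sigma3 (m x y : ℝ) : ℝ :=
  (-3 * y ^ ((m + 3) / 3 : ℝ) / (x * (m + 3))) ^ 3

/-- u₂(x,y) = λ₂ x^{β−4} y F((5−β)/3, (6−β)/3; (2+β)/3; σ(x,y)). -/
noncomputable def uThird2 (m β lam x y : ℝ) : ℝ :=
  lam * x ^ (β - 4 : ℝ) * y *
    GaussF ((5 - β) / 3) ((6 - β) / 3) ((2 + β) / 3) (sigma3 m x y)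

open Set Filter

noncomputable def hgcoef (β : ℝ) (k : ℕ) : ℝ :=
  poch ((5 - β) / 3) k * poch ((6 - β) / 3) k /
    (poch ((2 + β) / 3) k * (Nat.factorial k : ℝ))

lemma poch_succ (a : ℝ) (k : ℕ) : poch a (k + 1) = poch a k * (a + k) := by
  simp [poch, Finset.prod_range_succ]

lemma poch_pos {a : ℝ} (ha : 0 < a) : ∀ k, 0 < poch a k := by
  intro k
  induction k with
  | zero => simp [poch]
  | succ n ih => rw [poch_succ]; exact mul_pos ih (by positivity)

lemma hgcoef_pos {β : ℝ} (h0 : 0 < β) (h1 : β < 1) (k : ℕ) : 0 < hgcoef β k := by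
  have h5 : (0:ℝ) < (5 - β) / 3 := by linarith
  have h6 : (0:ℝ) < (6 - β) / 3 := by linarith
  have h2 : (0:ℝ) < (2 + β) / 3 := by linarith
  have := poch_pos h5 k
  have := poch_pos h6 k
  have := poch_pos h2 k
  have : (0:ℝ) < (Nat.factorial k : ℝ) := by positivity
  unfold hgcoef; positivity

lemma hgcoef_succ {β : ℝ} (h0 : 0 < β) (h1 : β < 1) (k : ℕ) :
    hgcoef β (k + 1) = hgcoef β k *
      (((5 - β) / 3 + k) * ((6 - β) / 3 + k) / (((2 + β) / 3 + k) * (k + 1))) := by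
  have h2 : (0:ℝ) < (2 + β) / 3 := by linarith
  have hc := poch_pos h2 k
  have hf : (0:ℝ) < (Nat.factorial k : ℝ) := by positivity
  unfold hgcoef
  rw [poch_succ, poch_succ, poch_succ, Nat.factorial_succ]
  push_cast
  field_simp

lemma summable_main {β : ℝ} (h0 : 0 < β) (h1 : β < 1) {ρ : ℝ} (hρ : 0 ≤ ρ) (hρ1 : ρ < 1)
    (n : ℕ) : Summable fun k : ℕ => hgcoef β k * (1 + k : ℝ) ^ n * ρ ^ k := by
  set r : ℝ := (1 + ρ) / 2 with hr
  have hr1 : r < 1 := by rw [hr]; linarith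
  apply summable_of_ratio_norm_eventually_le hr1
  -- ratio g k tends to ρ < r
  have h2 : (0:ℝ) < (2 + β) / 3 := by linarith
  set g : ℕ → ℝ := fun k =>
    (((5 - β) / 3 + k) * ((6 - β) / 3 + k) / (((2 + β) / 3 + k) * (k + 1))) *
      ((2 + k) / (1 + k)) ^ n * ρ with hg
  have hlim : Filter.Tendsto g Filter.atTop (nhds ρ) := by
    have hk : Filter.Tendsto (fun k : ℕ => (k : ℝ)) Filter.atTop Filter.atTop :=
      tendsto_natCast_atTop_atTop
    have hbase : ∀ c : ℝ, Filter.Tendsto (fun k : ℕ => c + (k:ℝ)) Filter.atTop Filter.atTop :=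
      fun c => Filter.tendsto_atTop_add_const_left _ c hk
    have hfrac : ∀ c d : ℝ, Filter.Tendsto (fun k : ℕ => (c + (k:ℝ)) / (d + k))
        Filter.atTop (nhds 1) := by
      intro c d
      have : Filter.Tendsto (fun k : ℕ => 1 + (c - d) / (d + k)) Filter.atTop (nhds 1) := by
        have h0' : Filter.Tendsto (fun k : ℕ => (c - d) / (d + k)) Filter.atTop (nhds 0) :=
          Filter.Tendsto.div_atTop tendsto_const_nhds (hbase d)
        simpa using tendsto_const_nhds.add h0'
      apply this.congr'
      filter_upwards [(hbase d).eventually_gt_atTop 0] with k hk0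
      field_simp
      ring
    have e1 : Filter.Tendsto (fun k : ℕ =>
        (((5 - β) / 3 + k) / ((2 + β) / 3 + k)) * (((6 - β) / 3 + k) / ((k:ℝ) + 1)))
        Filter.atTop (nhds 1) := by
      simpa using (hfrac ((5 - β)/3) ((2 + β)/3)).mul
        (by simpa [add_comm] using hfrac ((6 - β)/3) 1)
    have e2 : Filter.Tendsto (fun k : ℕ => ((2 + (k:ℝ)) / (1 + k)) ^ n)
        Filter.atTop (nhds 1) := by
      simpa using (hfrac 2 1).pow n
    have := (e1.mul e2).mul (tendsto_const_nhds (x := ρ))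
    simp only [one_mul] at this
    apply this.congr'
    filter_upwards [(hbase ((2+β)/3)).eventually_gt_atTop 0,
      (hbase 1).eventually_gt_atTop 0] with k hk1 hk2
    rw [hg]
    have hk3 : ((k:ℝ) + 1) > 0 := by linarith
    field_simp
  have hev : ∀ᶠ k in Filter.atTop, g k ≤ r := by
    have : ρ < r := by rw [hr]; linarith
    exact hlim.eventually_le_const this
  filter_upwards [hev] with k hk
  have hpos := (hgcoef_pos h0 h1 k)
  have hterm : hgcoef β (k+1) * (1 + (k+1:ℕ) : ℝ) ^ n * ρ ^ (k+1)
      = (hgcoef β k * (1 + k : ℝ) ^ n * ρ ^ k) * g k := by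
    rw [hgcoef_succ h0 h1, hg, pow_succ]
    have hk1 : ((k:ℝ) + 1) > 0 := by positivity
    have hk2 : ((1:ℝ) + k) > 0 := by positivity
    have h2k : (0:ℝ) < (2 + β)/3 + k := by positivity
    push_cast
    rw [div_pow]
    field_simp
    ring
  rw [Real.norm_eq_abs, Real.norm_eq_abs, hterm]
  have habs : 0 ≤ hgcoef β k * (1 + k : ℝ) ^ n * ρ ^ k :=
    mul_nonneg (mul_nonneg hpos.le (by positivity)) (by positivity)
  have hk0 : (0:ℝ) ≤ (k:ℝ) := Nat.cast_nonneg k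
  have hgnn : 0 ≤ g k := by
    rw [hg]
    exact mul_nonneg (mul_nonneg (div_nonneg
      (mul_nonneg (by linarith) (by linarith)) (mul_nonneg (by linarith) (by linarith)))
      (pow_nonneg (div_nonneg (by linarith) (by linarith)) n)) hρ
  rw [abs_of_nonneg (mul_nonneg habs hgnn), abs_of_nonneg habs]
  calc hgcoef β k * (1 + k:ℝ) ^ n * ρ ^ k * g k
      ≤ hgcoef β k * (1 + k:ℝ) ^ n * ρ ^ k * r := by
        exact mul_le_mul_of_nonneg_left hk habs
    _ = r * (hgcoef β k * (1 + k:ℝ) ^ n * ρ ^ k) := by ring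

lemma rpow_base_le {x₁ x₂ s : ℝ} (e : ℝ) (h1 : 0 < x₁) (hs1 : x₁ ≤ s) (hs2 : s ≤ x₂) :
    s ^ e ≤ max (x₁ ^ e) (x₂ ^ e) := by
  rcases le_or_gt 0 e with he | he
  · exact le_max_of_le_right (Real.rpow_le_rpow (by linarith) hs2 he)
  · exact le_max_of_le_left (Real.rpow_le_rpow_of_nonpos h1 hs1 he.le)

lemma summable_rpow_series (aa : ℕ → ℝ) (p q x₁ x₂ : ℝ) (h1 : 0 < x₁)
    (hsum : Summable fun k => |aa k| * (max (x₁ ^ q) (x₂ ^ q)) ^ k)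
    {s : ℝ} (hs1 : x₁ ≤ s) (hs2 : s ≤ x₂) :
    Summable fun k : ℕ => aa k * s ^ (p + q * k) := by
  set w := max (x₁ ^ q) (x₂ ^ q) with hw
  set M := max (x₁ ^ p) (x₂ ^ p) with hM
  have hspos : 0 < s := lt_of_lt_of_le h1 hs1
  apply Summable.of_norm_bounded (hsum.mul_left M)
  intro k
  have hsplit : s ^ (p + q * k) = s ^ p * (s ^ q) ^ k := by
    rw [Real.rpow_add hspos, Real.rpow_mul hspos.le, Real.rpow_natCast]
  rw [Real.norm_eq_abs, hsplit, ← mul_assoc, abs_mul, abs_mul,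
    abs_of_nonneg (a := s ^ p) (by positivity), abs_of_nonneg (a := (s ^ q) ^ k) (by positivity),
    mul_assoc]
  have hb1 : s ^ p ≤ M := rpow_base_le p h1 hs1 hs2
  have hb2 : (s ^ q) ^ k ≤ w ^ k :=
    pow_le_pow_left₀ (Real.rpow_nonneg hspos.le q) (rpow_base_le q h1 hs1 hs2) k
  calc |aa k| * (s ^ p * (s ^ q) ^ k) ≤ |aa k| * (M * w ^ k) := by
        apply mul_le_mul_of_nonneg_left _ (abs_nonneg _)
        apply mul_le_mul hb1 hb2 (by positivity) ((Real.rpow_pos_of_pos h1 p).le.trans (le_max_left _ _))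
    _ = M * (|aa k| * w ^ k) := by ring

lemma key1 (aa : ℕ → ℝ) (p q x₁ x₂ : ℝ) (h1 : 0 < x₁)
    (hsum : ∀ n : ℕ, Summable fun k => |aa k| * (1 + k : ℝ) ^ n * (max (x₁ ^ q) (x₂ ^ q)) ^ k) :
    ∀ x ∈ Set.Ioo x₁ x₂,
      HasDerivAt (fun s => ∑' k : ℕ, aa k * s ^ (p + q * k))
        (∑' k : ℕ, aa k * (p + q * k) * x ^ (p - 1 + q * k)) x := by
  intro x hx
  set w := max (x₁ ^ q) (x₂ ^ q) with hw
  set M := max (x₁ ^ (p-1)) (x₂ ^ (p-1)) with hM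
  have hwnn : 0 ≤ w := (Real.rpow_pos_of_pos h1 q).le.trans (le_max_left _ _)
  have hMnn : 0 ≤ M := (Real.rpow_pos_of_pos h1 (p-1)).le.trans (le_max_left _ _)
  set u : ℕ → ℝ := fun k => ((|p| + |q|) * M) * (|aa k| * (1 + k : ℝ) ^ 1 * w ^ k) with hu
  have hus : Summable u := (hsum 1).mul_left _
  apply hasDerivAt_tsum_of_isPreconnected hus isOpen_Ioo isPreconnected_Ioo
    (g' := fun k s => aa k * (p + q * k) * s ^ (p - 1 + q * k)) ?_ ?_ hx ?_ hx
  · -- derivatives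
    intro k s hs
    have hs0 : s ≠ 0 := ne_of_gt (lt_trans h1 hs.1)
    have := ((Real.hasDerivAt_rpow_const (p := p + q * k) (Or.inl hs0)).const_mul (aa k))
    refine this.congr_deriv ?_
    rw [show p + q * (k:ℝ) - 1 = p - 1 + q * k by ring]; ring
  · -- bound
    intro k s hs
    have hspos : 0 < s := lt_trans h1 hs.1
    have hsplit : s ^ (p - 1 + q * k) = s ^ (p-1) * (s ^ q) ^ k := by
      rw [Real.rpow_add hspos, Real.rpow_mul hspos.le, Real.rpow_natCast]
    rw [Real.norm_eq_abs, abs_mul, abs_mul, hsplit,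
      abs_of_nonneg (a := s ^ (p-1) * (s ^ q) ^ k) (by positivity), hu]
    have hb1 : s ^ (p-1) ≤ M := rpow_base_le (p-1) h1 hs.1.le hs.2.le
    have hb2 : (s ^ q) ^ k ≤ w ^ k :=
      pow_le_pow_left₀ (Real.rpow_nonneg hspos.le q) (rpow_base_le q h1 hs.1.le hs.2.le) k
    have hb3 : |p + q * k| ≤ (|p| + |q|) * (1 + k) := by
      calc |p + q * k| ≤ |p| + |q * k| := abs_add_le _ _
        _ = |p| + |q| * k := by rw [abs_mul, Nat.abs_cast]
        _ ≤ (|p| + |q|) * (1 + k) := by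
            have : (0:ℝ) ≤ k := Nat.cast_nonneg k
            nlinarith [abs_nonneg p, abs_nonneg q]
    calc |aa k| * |p + q * k| * (s ^ (p-1) * (s ^ q) ^ k)
        ≤ |aa k| * ((|p| + |q|) * (1 + k)) * (M * w ^ k) := by
          apply mul_le_mul
          · exact mul_le_mul_of_nonneg_left hb3 (abs_nonneg _)
          · exact mul_le_mul hb1 hb2 (by positivity)
              ((Real.rpow_pos_of_pos h1 (p-1)).le.trans (le_max_left _ _))
          · positivity
          · positivity
      _ = (|p| + |q|) * M * (|aa k| * (1 + k : ℝ) ^ 1 * w ^ k) := by ring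
  · -- summability at x
    have h' : Summable fun k => |aa k| * w ^ k := by
      apply Summable.of_nonneg_of_le (fun k => by positivity) _ (hsum 0)
      intro k
      simp only [pow_zero, one_mul]
      exact le_of_eq (by ring)
    exact summable_rpow_series aa p q x₁ x₂ h1 h' hx.1.le hx.2.le

lemma hsum_shift (aa : ℕ → ℝ) (w C d : ℝ) (hw : 0 ≤ w)
    (hsum : ∀ n : ℕ, Summable fun k => |aa k| * (1 + k : ℝ) ^ n * w ^ k) :
    ∀ n : ℕ, Summable fun k => |aa k * (C + d * k)| * (1 + k : ℝ) ^ n * w ^ k := by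
  intro n
  apply Summable.of_nonneg_of_le (fun k => by positivity) _ ((hsum (n+1)).mul_left (|C| + |d|))
  intro k
  have hk : (0:ℝ) ≤ k := Nat.cast_nonneg k
  have hb : |C + d * k| ≤ (|C| + |d|) * (1 + k) := by
    calc |C + d * k| ≤ |C| + |d| * k := by
          refine (abs_add_le _ _).trans ?_
          rw [abs_mul, Nat.abs_cast]
      _ ≤ (|C| + |d|) * (1 + k) := by nlinarith [abs_nonneg C, abs_nonneg d]
  rw [abs_mul]
  calc |aa k| * |C + d * k| * (1 + k:ℝ) ^ n * w ^ k
      ≤ |aa k| * ((|C| + |d|) * (1 + k)) * (1 + k:ℝ) ^ n * w ^ k := by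
        have : (0:ℝ) ≤ (1 + k:ℝ) ^ n * w ^ k := by positivity
        apply mul_le_mul_of_nonneg_right _ (by positivity)
        exact mul_le_mul_of_nonneg_right
          (mul_le_mul_of_nonneg_left hb (abs_nonneg _)) (by positivity)
    _ = (|C| + |d|) * (|aa k| * (1 + k:ℝ) ^ (n+1) * w ^ k) := by ring

lemma derivEqOn' {f g : ℝ → ℝ} {S : Set ℝ} (hS : IsOpen S) (h : Set.EqOn f g S) :
    Set.EqOn (deriv f) (deriv g) S := fun z hz =>
  Filter.EventuallyEq.deriv_eq (Filter.eventuallyEq_of_mem (hS.mem_nhds hz) h)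

lemma iteratedDeriv_eqOn {f g : ℝ → ℝ} {S : Set ℝ} (hS : IsOpen S) (h : Set.EqOn f g S)
    (n : ℕ) : Set.EqOn (iteratedDeriv n f) (iteratedDeriv n g) S := by
  induction n with
  | zero => simpa [iteratedDeriv_zero] using h
  | succ n ih =>
    intro z hz
    simp only [iteratedDeriv_succ]
    exact derivEqOn' hS ih hz

lemma key3 (aa : ℕ → ℝ) (p q x₁ x₂ : ℝ) (h1 : 0 < x₁)
    (hsum : ∀ n : ℕ, Summable fun k => |aa k| * (1 + k : ℝ) ^ n * (max (x₁ ^ q) (x₂ ^ q)) ^ k) :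
    ∀ x ∈ Set.Ioo x₁ x₂,
      iteratedDeriv 3 (fun s => ∑' k : ℕ, aa k * s ^ (p + q * k)) x
        = ∑' k : ℕ, (aa k * (p + q * k) * (p - 1 + q * k) * (p - 2 + q * k))
            * x ^ (p - 3 + q * k) := by
  have hwnn : 0 ≤ max (x₁ ^ q) (x₂ ^ q) :=
    (Real.rpow_pos_of_pos h1 q).le.trans (le_max_left _ _)
  set aa1 : ℕ → ℝ := fun k => aa k * (p + q * k) with ha1
  set aa2 : ℕ → ℝ := fun k => aa1 k * (p - 1 + q * k) with ha2
  set aa3 : ℕ → ℝ := fun k => aa2 k * (p - 2 + q * k) with ha3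
  have hsum1 := hsum_shift aa _ p q hwnn hsum
  have hsum2 := hsum_shift aa1 _ (p-1) q hwnn hsum1
  have hsum3 := hsum_shift aa2 _ (p-2) q hwnn hsum2
  intro x hx
  set F0 : ℝ → ℝ := fun s => ∑' k : ℕ, aa k * s ^ (p + q * k) with hF0
  set F1 : ℝ → ℝ := fun s => ∑' k : ℕ, aa1 k * s ^ ((p-1) + q * k) with hF1
  set F2 : ℝ → ℝ := fun s => ∑' k : ℕ, aa2 k * s ^ ((p-2) + q * k) with hF2
  have hd1 : ∀ z ∈ Set.Ioo x₁ x₂, HasDerivAt F0 (F1 z) z := by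
    intro z hz
    simpa using key1 aa p q x₁ x₂ h1 hsum z hz
  have hd2 : ∀ z ∈ Set.Ioo x₁ x₂, HasDerivAt F1 (F2 z) z := by
    intro z hz
    simpa [ha2, show p - 1 - 1 = p - 2 by ring] using key1 aa1 (p-1) q x₁ x₂ h1 hsum1 z hz
  have hd3 : ∀ z ∈ Set.Ioo x₁ x₂, HasDerivAt F2
      (∑' k : ℕ, aa3 k * z ^ ((p-3) + q * k)) z := by
    intro z hz
    have := key1 aa2 (p-2) q x₁ x₂ h1 hsum2 z hz
    simpa [ha3, show p - 2 - 1 = p - 3 by ring] using this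
  have e1 : Set.EqOn (deriv F0) F1 (Set.Ioo x₁ x₂) := fun z hz => (hd1 z hz).deriv
  have e2 : Set.EqOn (deriv (deriv F0)) (deriv F1) (Set.Ioo x₁ x₂) :=
    derivEqOn' isOpen_Ioo e1
  have e2' : Set.EqOn (deriv (deriv F0)) F2 (Set.Ioo x₁ x₂) :=
    fun z hz => (e2 hz).trans ((hd2 z hz).deriv)
  have e3 : Set.EqOn (deriv (deriv (deriv F0))) (deriv F2) (Set.Ioo x₁ x₂) :=
    derivEqOn' isOpen_Ioo e2'
  have : iteratedDeriv 3 F0 x = deriv (deriv (deriv F0)) x := by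
    simp [iteratedDeriv_succ, iteratedDeriv_zero]
  rw [this, e3 hx, (hd3 x hx).deriv]

lemma sigma3_eq {m : ℝ} (hm3 : (0:ℝ) < m + 3) {s t : ℝ} (hs : 0 < s) (ht : 0 < t) :
    sigma3 m s t = (-27 / (m+3)^3) * t ^ ((m+3) : ℝ) * s ^ ((-3) : ℝ) := by
  unfold sigma3
  rw [div_pow, mul_pow, mul_pow]
  have h1 : (t ^ ((m+3)/3 : ℝ)) ^ (3:ℕ) = t ^ ((m+3) : ℝ) := by
    rw [← Real.rpow_natCast (t ^ ((m+3)/3 : ℝ)) 3, ← Real.rpow_mul ht.le]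
    norm_num
  have h2 : s ^ ((-3) : ℝ) = (s ^ (3:ℕ))⁻¹ := by
    rw [← Real.rpow_natCast s 3, ← Real.rpow_neg hs.le]
    norm_num
  rw [h1, h2]
  have hs3 : s ^ (3:ℕ) ≠ 0 := by positivity
  have hm3' : (m+3) ^ (3:ℕ) ≠ 0 := by positivity
  field_simp
  ring


set_option maxHeartbeats 2000000 in
theorem uThird2_solves (m β lam : ℝ) (hm : 0 < m) (hβ : β = m / (m + 3)) :
    ∀ x y : ℝ, 0 < x → 0 < y → |sigma3 m x y| < 1 →
      y ^ m * iteratedDeriv 3 (fun s => uThird2 m β lam s y) x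
        - iteratedDeriv 3 (fun s => uThird2 m β lam x s) y = 0 := by
  have hm3 : (0:ℝ) < m + 3 := by linarith
  have hβ0 : 0 < β := by rw [hβ]; positivity
  have hβ1 : β < 1 := by rw [hβ, div_lt_one hm3]; linarith
  intro x y hx hy hσ
  set D : ℝ := -27 / (m+3)^3 with hD
  set ρ : ℝ := |sigma3 m x y| with hρdef
  have hρ0 : 0 ≤ ρ := abs_nonneg _
  have hρ1 : ρ < 1 := hσ
  have hyp3 : (0:ℝ) < y ^ ((m+3):ℝ) := Real.rpow_pos_of_pos hy _
  have hxm3 : (0:ℝ) < x ^ ((-3):ℝ) := Real.rpow_pos_of_pos hx _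
  have hσxy : sigma3 m x y = D * y ^ ((m+3):ℝ) * x ^ ((-3):ℝ) := sigma3_eq hm3 hx hy
  -- ### x-direction
  set Ay : ℝ := D * y ^ ((m+3):ℝ) with hAy
  set ax : ℕ → ℝ := fun k => lam * y * (hgcoef β k * Ay ^ k) with hax
  have hfeq : Set.EqOn (fun s => uThird2 m β lam s y)
      (fun s => ∑' k : ℕ, ax k * s ^ (β - 4 + (-3) * (k:ℝ))) (Set.Ioi 0) := by
    intro s hs
    have hs0 : (0:ℝ) < s := hs
    simp only
    unfold uThird2 GaussF
    rw [sigma3_eq hm3 hs0 hy, ← tsum_mul_left]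
    apply tsum_congr
    intro k
    have hzk : (D * y ^ ((m+3):ℝ) * s ^ ((-3):ℝ)) ^ k = Ay ^ k * s ^ ((-3) * (k:ℝ)) := by
      rw [mul_pow, ← Real.rpow_natCast (s ^ ((-3):ℝ)) k, ← Real.rpow_mul hs0.le, hAy]
    rw [hzk, Real.rpow_add hs0, hax]
    unfold hgcoef
    ring
  -- the interval for x
  set tt : ℝ := ((1+ρ)/2) ^ ((1:ℝ)/3) with htt
  have htt0 : 0 < tt := Real.rpow_pos_of_pos (by linarith) _
  have htt1 : tt < 1 := Real.rpow_lt_one (by linarith) (by linarith) (by norm_num)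
  set x₁ : ℝ := x * tt with hx₁def
  set x₂ : ℝ := x + 1 with hx₂def
  have hx₁ : 0 < x₁ := mul_pos hx htt0
  have hxmem : x ∈ Set.Ioo x₁ x₂ := by
    constructor
    · rw [hx₁def]; nlinarith
    · rw [hx₂def]; linarith
  have hx₁pow : x₁ ^ ((-3):ℝ) = x ^ ((-3):ℝ) * (2/(1+ρ)) := by
    rw [hx₁def, Real.mul_rpow hx.le htt0.le, htt, ← Real.rpow_mul (by linarith)]
    norm_num
    left
    rw [Real.rpow_neg_one, inv_div]
  have hρeqx : ρ = |Ay| * x ^ ((-3):ℝ) := by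
    rw [hρdef, hσxy, abs_mul, abs_of_pos hxm3]
  have hρ₁lt : |Ay| * x₁ ^ ((-3):ℝ) < 1 := by
    rw [hx₁pow, ← mul_assoc, ← hρeqx, ← mul_div_assoc,
      div_lt_one (by linarith : (0:ℝ) < 1+ρ)]
    linarith
  have hρ₁nn : 0 ≤ |Ay| * x₁ ^ ((-3):ℝ) :=
    mul_nonneg (abs_nonneg _) (Real.rpow_pos_of_pos hx₁ _).le
  have hwx : max (x₁ ^ ((-3):ℝ)) (x₂ ^ ((-3):ℝ)) = x₁ ^ ((-3):ℝ) :=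
    max_eq_left (Real.rpow_le_rpow_of_nonpos hx₁ (by rw [hx₂def, hx₁def]; nlinarith)
      (by norm_num))
  have hsumax : ∀ n : ℕ, Summable fun k : ℕ =>
      |ax k| * (1 + k : ℝ) ^ n * (max (x₁ ^ ((-3):ℝ)) (x₂ ^ ((-3):ℝ))) ^ k := by
    intro n
    apply Summable.congr ((summable_main hβ0 hβ1 hρ₁nn hρ₁lt n).mul_left (|lam| * |y|))
    intro k
    rw [hwx]
    have habs : |ax k| = |lam| * |y| * (hgcoef β k * |Ay| ^ k) := by
      rw [hax]
      simp only
      rw [abs_mul, abs_mul, abs_mul, abs_pow, abs_of_pos (hgcoef_pos hβ0 hβ1 k)]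
    rw [habs, mul_pow]
    ring
  have hXkey := key3 ax (β - 4) (-3) x₁ x₂ hx₁ hsumax x hxmem
  -- ### y-direction
  set Bx : ℝ := D * x ^ ((-3):ℝ) with hBx
  set ay : ℕ → ℝ := fun k => lam * x ^ ((β - 4):ℝ) * (hgcoef β k * Bx ^ k) with hay
  have hgeq : Set.EqOn (fun s => uThird2 m β lam x s)
      (fun s => ∑' k : ℕ, ay k * s ^ (1 + (m+3) * (k:ℝ))) (Set.Ioi 0) := by
    intro s hs
    have hs0 : (0:ℝ) < s := hs
    simp only
    unfold uThird2 GaussF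
    rw [sigma3_eq hm3 hx hs0, ← tsum_mul_left]
    apply tsum_congr
    intro k
    have hzk : (D * s ^ ((m+3):ℝ) * x ^ ((-3):ℝ)) ^ k = Bx ^ k * s ^ ((m+3) * (k:ℝ)) := by
      rw [mul_pow, mul_pow, ← Real.rpow_natCast (s ^ ((m+3):ℝ)) k, ← Real.rpow_mul hs0.le,
        hBx, mul_pow]
      ring
    rw [hzk, Real.rpow_add hs0, Real.rpow_one, hay]
    unfold hgcoef
    ring
  set tt' : ℝ := (2/(1+ρ)) ^ ((1:ℝ)/(m+3)) with htt'
  have htt'1 : 1 < tt' := by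
    apply Real.one_lt_rpow_iff_of_pos (by positivity) |>.mpr
    left
    constructor
    · rw [lt_div_iff₀ (by linarith)]; linarith
    · positivity
  set y₁ : ℝ := y / 2 with hy₁def
  set y₂ : ℝ := y * tt' with hy₂def
  have hy₁ : 0 < y₁ := by rw [hy₁def]; linarith
  have hymem : y ∈ Set.Ioo y₁ y₂ := by
    constructor
    · rw [hy₁def]; linarith
    · rw [hy₂def]; nlinarith
  have hy₂pow : y₂ ^ ((m+3):ℝ) = y ^ ((m+3):ℝ) * (2/(1+ρ)) := by
    rw [hy₂def, Real.mul_rpow hy.le (by positivity), htt', ← Real.rpow_mul (by positivity)]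
    congr 2
    field_simp
    rw [Real.rpow_one]
    field_simp
  have hρeqy : ρ = |Bx| * y ^ ((m+3):ℝ) := by
    rw [hρeqx, hAy, hBx, abs_mul, abs_mul, abs_of_pos hyp3, abs_of_pos hxm3]
    ring
  have hρ₂lt : |Bx| * y₂ ^ ((m+3):ℝ) < 1 := by
    rw [hy₂pow, ← mul_assoc, ← hρeqy, ← mul_div_assoc,
      div_lt_one (by linarith : (0:ℝ) < 1+ρ)]
    linarith
  have hρ₂nn : 0 ≤ |Bx| * y₂ ^ ((m+3):ℝ) :=
    mul_nonneg (abs_nonneg _) (Real.rpow_pos_of_pos (by rw [hy₂def]; nlinarith) _).le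
  have hwy : max (y₁ ^ ((m+3):ℝ)) (y₂ ^ ((m+3):ℝ)) = y₂ ^ ((m+3):ℝ) :=
    max_eq_right (Real.rpow_le_rpow hy₁.le (by rw [hy₁def, hy₂def]; nlinarith) (by linarith))
  have hsumay : ∀ n : ℕ, Summable fun k : ℕ =>
      |ay k| * (1 + k : ℝ) ^ n * (max (y₁ ^ ((m+3):ℝ)) (y₂ ^ ((m+3):ℝ))) ^ k := by
    intro n
    apply Summable.congr ((summable_main hβ0 hβ1 hρ₂nn hρ₂lt n).mul_left
      (|lam| * |x ^ ((β - 4):ℝ)|))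
    intro k
    rw [hwy]
    have habs : |ay k| = |lam| * |x ^ ((β - 4):ℝ)| * (hgcoef β k * |Bx| ^ k) := by
      rw [hay]
      simp only
      rw [abs_mul, abs_mul, abs_mul, abs_pow, abs_of_pos (hgcoef_pos hβ0 hβ1 k)]
    rw [habs, mul_pow]
    ring
  have hYkey := key3 ay 1 (m+3) y₁ y₂ hy₁ hsumay y hymem
  -- ### assemble
  rw [iteratedDeriv_eqOn isOpen_Ioi hfeq 3 (Set.mem_Ioi.mpr hx),
    iteratedDeriv_eqOn isOpen_Ioi hgeq 3 (Set.mem_Ioi.mpr hy), hXkey, hYkey]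
  -- summability of the y-series (3rd derivative)
  have hwynn : 0 ≤ max (y₁ ^ ((m+3):ℝ)) (y₂ ^ ((m+3):ℝ)) :=
    (Real.rpow_pos_of_pos hy₁ _).le.trans (le_max_left _ _)
  have s1 := hsum_shift ay _ 1 (m+3) hwynn hsumay
  have s2 := hsum_shift _ _ (1-1) (m+3) hwynn s1
  have s3 := hsum_shift _ _ (1-2) (m+3) hwynn s2
  have hsy : Summable fun k : ℕ =>
      ay k * (1 + (m+3) * (k:ℝ)) * (1 - 1 + (m+3) * (k:ℝ)) * (1 - 2 + (m+3) * (k:ℝ))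
        * y ^ (1 - 3 + (m+3) * (k:ℝ)) := by
    apply summable_rpow_series _ (1-3) (m+3) y₁ y₂ hy₁ _ hymem.1.le hymem.2.le
    apply Summable.congr (s3 0)
    intro k
    simp
  rw [Summable.tsum_eq_zero_add hsy]
  have hzero : ay 0 * (1 + (m+3) * ((0:ℕ):ℝ)) * (1 - 1 + (m+3) * ((0:ℕ):ℝ))
      * (1 - 2 + (m+3) * ((0:ℕ):ℝ)) * y ^ (1 - 3 + (m+3) * ((0:ℕ):ℝ)) = 0 := by
    norm_num
  rw [hzero, zero_add, ← tsum_mul_left, sub_eq_zero]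
  apply tsum_congr
  intro k
  -- termwise identity
  push_cast
  have hyk : (y ^ ((m+3):ℝ)) ^ k = y ^ ((m+3) * (k:ℝ)) := by
    rw [← Real.rpow_natCast (y ^ ((m+3):ℝ)) k, ← Real.rpow_mul hy.le]
  have hxk : (x ^ ((-3):ℝ)) ^ (k+1) = x ^ ((-3) * ((k:ℝ)+1)) := by
    rw [← Real.rpow_natCast (x ^ ((-3):ℝ)) (k+1), ← Real.rpow_mul hx.le]
    push_cast
    ring_nf
  have hAyk : Ay ^ k = D ^ k * y ^ ((m+3) * (k:ℝ)) := by rw [hAy, mul_pow, hyk]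
  have hBxk : Bx ^ (k+1) = D ^ (k+1) * x ^ ((-3) * ((k:ℝ)+1)) := by
    rw [hBx, mul_pow, hxk]
  have hyE : y ^ m * y * y ^ ((m+3) * (k:ℝ)) = y ^ (1 - 3 + (m+3) * ((k:ℝ)+1)) := by
    rw [← Real.rpow_add_one hy.ne' m, ← Real.rpow_add hy]
    congr 1
    ring
  have hxE : x ^ ((β-4):ℝ) * x ^ ((-3) * ((k:ℝ)+1)) = x ^ (β - 4 - 3 + (-3) * (k:ℝ)) := by
    rw [← Real.rpow_add hx]
    congr 1
    ring
  have h2k : ((2+β)/3 + (k:ℝ)) ≠ 0 := by positivity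
  have hk1 : ((k:ℝ)+1) ≠ 0 := by positivity
  have hm3' : (m+3:ℝ) ≠ 0 := hm3.ne'
  have hscal : hgcoef β k *
      ((β - 4 + (-3) * (k:ℝ)) * (β - 4 - 1 + (-3) * (k:ℝ)) * (β - 4 - 2 + (-3) * (k:ℝ)))
      = hgcoef β (k+1) * D *
        ((1 + (m+3) * ((k:ℝ)+1)) * (1 - 1 + (m+3) * ((k:ℝ)+1)) * (1 - 2 + (m+3) * ((k:ℝ)+1))) := by
    rw [hgcoef_succ hβ0 hβ1 k, hD, hβ]
    push_cast
    field_simp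
    ring
  calc y ^ m * (ax k * (β - 4 + (-3) * (k:ℝ)) * (β - 4 - 1 + (-3) * (k:ℝ))
        * (β - 4 - 2 + (-3) * (k:ℝ)) * x ^ (β - 4 - 3 + (-3) * (k:ℝ)))
      = (y ^ m * y * y ^ ((m+3) * (k:ℝ))) * (lam * D ^ k *
          (hgcoef β k * ((β - 4 + (-3) * (k:ℝ)) * (β - 4 - 1 + (-3) * (k:ℝ))
            * (β - 4 - 2 + (-3) * (k:ℝ)))) * x ^ (β - 4 - 3 + (-3) * (k:ℝ))) := by
        rw [hax]
        simp only
        rw [hAyk]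
        ring
    _ = y ^ (1 - 3 + (m+3) * ((k:ℝ)+1)) * (lam * D ^ k *
          (hgcoef β (k+1) * D * ((1 + (m+3) * ((k:ℝ)+1)) * (1 - 1 + (m+3) * ((k:ℝ)+1))
            * (1 - 2 + (m+3) * ((k:ℝ)+1)))) * x ^ (β - 4 - 3 + (-3) * (k:ℝ))) := by
        rw [hyE, hscal]
    _ = (x ^ ((β-4):ℝ) * x ^ ((-3) * ((k:ℝ)+1))) * (lam * D ^ (k+1) *
          (hgcoef β (k+1) * ((1 + (m+3) * ((k:ℝ)+1)) * (1 - 1 + (m+3) * ((k:ℝ)+1))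
            * (1 - 2 + (m+3) * ((k:ℝ)+1)))) * y ^ (1 - 3 + (m+3) * ((k:ℝ)+1))) := by
        rw [hxE, pow_succ]
        ring
    _ = ay (k+1) * (1 + (m+3) * ((k:ℝ)+1)) * (1 - 1 + (m+3) * ((k:ℝ)+1))
          * (1 - 2 + (m+3) * ((k:ℝ)+1)) * y ^ (1 - 3 + (m+3) * ((k:ℝ)+1)) := by
        rw [hay]
        simp only
        rw [hBxk]
        ring
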